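/- arXiv:1509.02569 — 3 statements merged into one kernel-verified Lean document; each statement's English description precedes it below -/
import Mathlib

section
/- Let Δ ⊂ ℝⁿ be a nondegenerate simplex with vertices x₀,…,xₙ and barycenter b = (x₀+⋯+xₙ)/(n+1). If f : Δ → ℝ is convex, then f(b) ≤ (1/Vol(Δ)) ∫_Δ f(x) dx ≤ (f(x₀)+⋯+f(xₙ))/(n+1). -/
open MeasureTheory

noncomputable section
variable {n : ℕ}

local notation "E" => EuclideanSpace ℝ (Fin n)

def Tmap (b : AffineBasis (Fin (n+1)) ℝ E) (σ : Equiv.Perm (Fin (n+1))) : E →ᵃ[ℝ] E :=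
  (LinearMap.toAffineMap (∑ i, (LinearMap.proj i).smulRight (b (σ i)))).comp b.coords

lemma Tmap_apply (b : AffineBasis (Fin (n+1)) ℝ E) (σ : Equiv.Perm (Fin (n+1))) (y : E) :
    Tmap b σ y = ∑ i, b.coord i y • b (σ i) := by
  simp [Tmap, AffineBasis.coords_apply]

lemma sum_coord_perm (b : AffineBasis (Fin (n+1)) ℝ E) (σ : Equiv.Perm (Fin (n+1))) (y : E) :
    ∑ i, b.coord (σ i) y = 1 :=
  (Fintype.sum_equiv σ _ _ (fun _ => rfl)).trans (b.sum_coord_apply_eq_one y)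

lemma Tmap_affineComb (b : AffineBasis (Fin (n+1)) ℝ E) (σ : Equiv.Perm (Fin (n+1))) (y : E) :
    Tmap b σ y = Finset.univ.affineCombination ℝ b (fun i => b.coord (σ⁻¹ i) y) := by
  rw [Finset.univ.affineCombination_eq_linear_combination _ _ (sum_coord_perm b σ⁻¹ y),
    Tmap_apply]
  refine Fintype.sum_equiv σ _ _ (fun i => ?_)
  simp

lemma coord_Tmap (b : AffineBasis (Fin (n+1)) ℝ E) (σ : Equiv.Perm (Fin (n+1))) (y : E)
    (j : Fin (n+1)) : b.coord j (Tmap b σ y) = b.coord (σ⁻¹ j) y := by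
  rw [Tmap_affineComb]
  exact b.coord_apply_combination_of_mem (Finset.mem_univ j) (sum_coord_perm b σ⁻¹ y)

lemma Tmap_mul (b : AffineBasis (Fin (n+1)) ℝ E) (σ τ : Equiv.Perm (Fin (n+1))) :
    Tmap b (σ * τ) = (Tmap b σ).comp (Tmap b τ) := by
  refine AffineMap.ext fun y => ?_
  rw [AffineMap.comp_apply, Tmap_apply, Tmap_apply b σ]
  simp only [coord_Tmap]
  refine Fintype.sum_equiv τ _ _ (fun i => ?_)
  simp [Equiv.Perm.mul_apply]

lemma Tmap_one (b : AffineBasis (Fin (n+1)) ℝ E) : Tmap b 1 = AffineMap.id ℝ E := by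
  refine AffineMap.ext fun y => ?_
  simp [Tmap_apply, b.linear_combination_coord_eq_self y]

lemma Tmap_basis (b : AffineBasis (Fin (n+1)) ℝ E) (σ : Equiv.Perm (Fin (n+1))) (j : Fin (n+1)) :
    Tmap b σ (b j) = b (σ j) := by
  rw [Tmap_apply, Finset.sum_eq_single j]
  · simp
  · intro i _ hij; simp [b.coord_apply_ne hij]
  · simp

lemma Tmap_det_abs (b : AffineBasis (Fin (n+1)) ℝ E) (σ : Equiv.Perm (Fin (n+1))) :
    |LinearMap.det (Tmap b σ).linear| = 1 := by
  have hmul : ∀ σ τ : Equiv.Perm (Fin (n+1)),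
      LinearMap.det (Tmap b (σ * τ)).linear
        = LinearMap.det (Tmap b σ).linear * LinearMap.det (Tmap b τ).linear := by
    intro σ τ
    rw [Tmap_mul]
    exact LinearMap.det_comp _ _
  have hpow : ∀ k : ℕ, LinearMap.det (Tmap b (σ ^ k)).linear
      = (LinearMap.det (Tmap b σ).linear) ^ k := by
    intro k
    induction k with
    | zero => simp [Tmap_one]
    | succ k ih => rw [pow_succ, hmul, ih, pow_succ]
  have h1 : (LinearMap.det (Tmap b σ).linear) ^ (orderOf σ) = 1 := by
    rw [← hpow, pow_orderOf_eq_one, Tmap_one]; simp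
  have hord : orderOf σ ≠ 0 := (orderOf_pos σ).ne'
  have habs : |LinearMap.det (Tmap b σ).linear| ^ (orderOf σ) = 1 := by
    rw [← abs_pow, h1, abs_one]
  exact (pow_eq_one_iff_of_nonneg (abs_nonneg _) hord).mp habs

lemma Tmap_measurePreserving (b : AffineBasis (Fin (n+1)) ℝ E) (σ : Equiv.Perm (Fin (n+1))) :
    MeasurePreserving (Tmap b σ) (volume : Measure E) volume := by
  set T := Tmap b σ
  have hdet : LinearMap.det T.linear ≠ 0 := by
    intro h
    have := Tmap_det_abs b σ
    rw [h] at this; simp at this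
  have hL : Measure.map T.linear (volume : Measure E) = volume := by
    rw [Measure.map_linearMap_addHaar_eq_smul_addHaar _ hdet]
    have : |(LinearMap.det T.linear)⁻¹| = 1 := by
      rw [abs_inv, Tmap_det_abs b σ]; norm_num
    rw [this]; simp
  have hLmp : MeasurePreserving T.linear (volume : Measure E) volume :=
    ⟨T.linear.continuous_of_finiteDimensional.measurable, hL⟩
  have hTmp : MeasurePreserving ((fun v => v + T 0) ∘ T.linear) (volume : Measure E) volume :=
    (measurePreserving_add_right volume (T 0)).comp hLmp
  have : ⇑T = (fun v => v + T 0) ∘ T.linear := by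
    funext y
    have := T.decomp
    rw [this]
    simp
  rwa [this]

def TmapHomeo (b : AffineBasis (Fin (n+1)) ℝ E) (σ : Equiv.Perm (Fin (n+1))) : E ≃ₜ E where
  toFun := Tmap b σ
  invFun := Tmap b σ⁻¹
  left_inv y := by
    have := Tmap_mul b σ⁻¹ σ
    rw [inv_mul_cancel, Tmap_one] at this
    have h2 := congrArg (fun g : E →ᵃ[ℝ] E => g y) this
    simpa using h2.symm
  right_inv y := by
    have := Tmap_mul b σ σ⁻¹
    rw [mul_inv_cancel, Tmap_one] at this
    have h2 := congrArg (fun g : E →ᵃ[ℝ] E => g y) this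
    simpa using h2.symm
  continuous_toFun := (Tmap b σ).continuous_of_finiteDimensional
  continuous_invFun := (Tmap b σ⁻¹).continuous_of_finiteDimensional

lemma Tmap_measurableEmbedding (b : AffineBasis (Fin (n+1)) ℝ E) (σ : Equiv.Perm (Fin (n+1))) :
    MeasurableEmbedding (Tmap b σ) :=
  (TmapHomeo b σ).measurableEmbedding

lemma Tmap_image (b : AffineBasis (Fin (n+1)) ℝ E) (σ : Equiv.Perm (Fin (n+1))) :
    Tmap b σ '' (convexHull ℝ (Set.range ⇑b)) = convexHull ℝ (Set.range ⇑b) := by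
  rw [AffineMap.image_convexHull]
  congr 1
  rw [← Set.range_comp]
  have : ⇑(Tmap b σ) ∘ ⇑b = ⇑b ∘ ⇑σ := by
    funext j; exact Tmap_basis b σ j
  rw [this, Set.range_comp, σ.surjective.range_eq, Set.image_univ]

lemma Tmap_preimage (b : AffineBasis (Fin (n+1)) ℝ E) (σ : Equiv.Perm (Fin (n+1))) :
    Tmap b σ ⁻¹' (convexHull ℝ (Set.range ⇑b)) = convexHull ℝ (Set.range ⇑b) := by
  ext y
  rw [Set.mem_preimage]
  conv_lhs => rw [← Tmap_image b σ]
  exact Function.Injective.mem_set_image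
    ((TmapHomeo b σ).injective : Function.Injective (Tmap b σ))

lemma Tmap_setIntegral (b : AffineBasis (Fin (n+1)) ℝ E) (σ : Equiv.Perm (Fin (n+1)))
    (g : E → ℝ) :
    ∫ y in convexHull ℝ (Set.range ⇑b), g (Tmap b σ y) = ∫ y in convexHull ℝ (Set.range ⇑b), g y := by
  have := (Tmap_measurePreserving b σ).setIntegral_preimage_emb (Tmap_measurableEmbedding b σ)
    g (convexHull ℝ (Set.range ⇑b))
  rwa [Tmap_preimage] at this

lemma Tmap_integrableOn (b : AffineBasis (Fin (n+1)) ℝ E) (σ : Equiv.Perm (Fin (n+1)))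
    {g : E → ℝ} (hg : IntegrableOn g (convexHull ℝ (Set.range ⇑b))) :
    IntegrableOn (fun y => g (Tmap b σ y)) (convexHull ℝ (Set.range ⇑b)) := by
  have h := ((Tmap_measurePreserving b σ).restrict_preimage_emb (Tmap_measurableEmbedding b σ)
    (convexHull ℝ (Set.range ⇑b)))
  rw [Tmap_preimage] at h
  exact (h.integrable_comp_emb (Tmap_measurableEmbedding b σ)).mpr hg

lemma sum_perm_eval {F : Type*} [AddCommMonoid F] (g : Fin (n+1) → F) (j : Fin (n+1)) :
    ∑ σ : Equiv.Perm (Fin (n+1)), g (σ j) = (Nat.factorial n) • ∑ k, g k := by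
  have h0 : ∑ σ : Equiv.Perm (Fin (n+1)), g (σ 0) = (Nat.factorial n) • ∑ k, g k := by
    rw [← Equiv.sum_comp (Equiv.Perm.decomposeFin).symm (fun σ => g (σ 0))]
    rw [Fintype.sum_prod_type]
    simp only [Equiv.Perm.decomposeFin_symm_apply_zero]
    rw [Finset.sum_comm]
    simp [Finset.sum_const, Fintype.card_perm]
  have hswap : ∑ σ : Equiv.Perm (Fin (n+1)), g (σ j) = ∑ σ : Equiv.Perm (Fin (n+1)), g (σ 0) := by
    rw [← Equiv.sum_comp (Equiv.mulRight (Equiv.swap 0 j)) (fun σ => g (σ j))]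
    refine Finset.sum_congr rfl fun σ _ => ?_
    simp [Equiv.Perm.mul_apply, Equiv.swap_apply_left]
  rw [hswap, h0]

lemma sum_Tmap (b : AffineBasis (Fin (n+1)) ℝ E) (y : E) :
    ∑ σ : Equiv.Perm (Fin (n+1)), Tmap b σ y = (Nat.factorial n) • ∑ j, b j := by
  calc ∑ σ : Equiv.Perm (Fin (n+1)), Tmap b σ y
      = ∑ σ : Equiv.Perm (Fin (n+1)), ∑ i, b.coord i y • b (σ i) := by
        simp only [Tmap_apply]
    _ = ∑ i, ∑ σ : Equiv.Perm (Fin (n+1)), b.coord i y • b (σ i) := Finset.sum_comm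
    _ = ∑ i, b.coord i y • ∑ σ : Equiv.Perm (Fin (n+1)), b (σ i) := by
        simp [Finset.smul_sum]
    _ = ∑ i, b.coord i y • ((Nat.factorial n) • ∑ j, b j) := by
        simp only [sum_perm_eval (⇑b)]
    _ = (∑ i, b.coord i y) • ((Nat.factorial n) • ∑ j, b j) := (Finset.sum_smul).symm
    _ = (Nat.factorial n) • ∑ j, b j := by rw [b.sum_coord_apply_eq_one]; simp

lemma coord_nonneg (b : AffineBasis (Fin (n+1)) ℝ E) {y : E}
    (hy : y ∈ convexHull ℝ (Set.range ⇑b)) (i : Fin (n+1)) : 0 ≤ b.coord i y := by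
  rw [convexHull_range_eq_exists_affineCombination] at hy
  obtain ⟨s, w, hw₀, hw₁, rfl⟩ := hy
  by_cases hi : i ∈ s
  · rw [b.coord_apply_combination_of_mem hi hw₁]
    exact hw₀ i hi
  · rw [b.coord_apply_combination_of_notMem hi hw₁]

lemma Tmap_mem (b : AffineBasis (Fin (n+1)) ℝ E) (σ : Equiv.Perm (Fin (n+1))) {y : E}
    (hy : y ∈ convexHull ℝ (Set.range ⇑b)) : Tmap b σ y ∈ convexHull ℝ (Set.range ⇑b) := by
  rw [← Tmap_image b σ]; exact Set.mem_image_of_mem _ hy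

lemma smul_sum_Tmap (b : AffineBasis (Fin (n+1)) ℝ E) (y : E) :
    ∑ σ : Equiv.Perm (Fin (n+1)), (((n+1).factorial : ℝ))⁻¹ • Tmap b σ y
      = ((n : ℝ)+1)⁻¹ • ∑ j, b j := by
  rw [← Finset.smul_sum, sum_Tmap]
  rw [← Nat.cast_smul_eq_nsmul ℝ, smul_smul]
  congr 1
  rw [Nat.factorial_succ]
  have h : ((n.factorial : ℝ)) ≠ 0 := Nat.cast_ne_zero.mpr n.factorial_ne_zero
  push_cast
  field_simp

lemma key (b : AffineBasis (Fin (n+1)) ℝ E) {f : E → ℝ}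
    (hf : ConvexOn ℝ (convexHull ℝ (Set.range ⇑b)) f) {y : E}
    (hy : y ∈ convexHull ℝ (Set.range ⇑b)) :
    f (((n : ℝ)+1)⁻¹ • ∑ j, b j)
      ≤ (((n+1).factorial : ℝ))⁻¹ * ∑ σ : Equiv.Perm (Fin (n+1)), f (Tmap b σ y) := by
  have hN : (((n+1).factorial : ℝ)) ≠ 0 := Nat.cast_ne_zero.mpr (n+1).factorial_ne_zero
  have h₁ : ∑ _σ : Equiv.Perm (Fin (n+1)), (((n+1).factorial : ℝ))⁻¹ = 1 := by
    rw [Finset.sum_const]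
    simp only [Finset.card_univ, Fintype.card_perm, Fintype.card_fin, nsmul_eq_mul]
    field_simp
  have hle := hf.map_sum_le (t := Finset.univ) (w := fun _ => (((n+1).factorial : ℝ))⁻¹)
    (p := fun σ => Tmap b σ y) (fun _ _ => by positivity) h₁ (fun σ _ => Tmap_mem b σ hy)
  rw [smul_sum_Tmap] at hle
  calc f (((n : ℝ)+1)⁻¹ • ∑ j, b j)
      ≤ ∑ σ : Equiv.Perm (Fin (n+1)), (((n+1).factorial : ℝ))⁻¹ • f (Tmap b σ y) := hle
    _ = (((n+1).factorial : ℝ))⁻¹ * ∑ σ : Equiv.Perm (Fin (n+1)), f (Tmap b σ y) := by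
        rw [← Finset.smul_sum]; simp [smul_eq_mul]

lemma fy_le_sum (b : AffineBasis (Fin (n+1)) ℝ E) {f : E → ℝ}
    (hf : ConvexOn ℝ (convexHull ℝ (Set.range ⇑b)) f) {y : E}
    (hy : y ∈ convexHull ℝ (Set.range ⇑b)) :
    f y ≤ ∑ i, b.coord i y * f (b i) := by
  have hle := hf.map_sum_le (t := Finset.univ) (w := fun i => b.coord i y) (p := ⇑b)
    (fun i _ => coord_nonneg b hy i) (b.sum_coord_apply_eq_one y)
    (fun i _ => subset_convexHull ℝ _ (Set.mem_range_self i))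
  rw [b.linear_combination_coord_eq_self] at hle
  simpa [smul_eq_mul] using hle

lemma fy_le_M (b : AffineBasis (Fin (n+1)) ℝ E) {f : E → ℝ}
    (hf : ConvexOn ℝ (convexHull ℝ (Set.range ⇑b)) f) {y : E}
    (hy : y ∈ convexHull ℝ (Set.range ⇑b)) :
    f y ≤ Finset.univ.sup' Finset.univ_nonempty (fun i => f (b i)) := by
  refine (fy_le_sum b hf hy).trans ?_
  calc ∑ i, b.coord i y * f (b i)
      ≤ ∑ i, b.coord i y * Finset.univ.sup' Finset.univ_nonempty (fun i => f (b i)) := by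
        refine Finset.sum_le_sum fun i _ => ?_
        exact mul_le_mul_of_nonneg_left (Finset.le_sup' (fun i => f (b i)) (Finset.mem_univ i))
          (coord_nonneg b hy i)
    _ = _ := by rw [← Finset.sum_mul, b.sum_coord_apply_eq_one, one_mul]

lemma B_le_fy (b : AffineBasis (Fin (n+1)) ℝ E) {f : E → ℝ}
    (hf : ConvexOn ℝ (convexHull ℝ (Set.range ⇑b)) f) {y : E}
    (hy : y ∈ convexHull ℝ (Set.range ⇑b)) :
    ((n+1).factorial : ℝ) * f (((n : ℝ)+1)⁻¹ • ∑ j, b j)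
      - (((n+1).factorial : ℝ) - 1) * Finset.univ.sup' Finset.univ_nonempty (fun i => f (b i))
        ≤ f y := by
  set M := Finset.univ.sup' Finset.univ_nonempty (fun i => f (b i)) with hMdef
  have hN : (0:ℝ) < ((n+1).factorial : ℝ) := by positivity
  have hkey := key b hf hy
  have hsum : ∑ σ : Equiv.Perm (Fin (n+1)), f (Tmap b σ y) ≤ f y + (((n+1).factorial : ℝ) - 1) * M := by
    rw [← Finset.add_sum_erase Finset.univ _ (Finset.mem_univ (1 : Equiv.Perm (Fin (n+1))))]
    have h1 : Tmap b 1 y = y := by rw [Tmap_one]; rfl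
    rw [h1]
    refine add_le_add le_rfl ?_
    calc ∑ σ ∈ Finset.univ.erase (1 : Equiv.Perm (Fin (n+1))), f (Tmap b σ y)
        ≤ ∑ _σ ∈ Finset.univ.erase (1 : Equiv.Perm (Fin (n+1))), M :=
          Finset.sum_le_sum fun σ _ => fy_le_M b hf (Tmap_mem b σ hy)
      _ = (((n+1).factorial : ℝ) - 1) * M := by
          rw [Finset.sum_const, Finset.card_erase_of_mem (Finset.mem_univ _), Finset.card_univ,
            Fintype.card_perm, Fintype.card_fin, nsmul_eq_mul]
          congr 1
          rw [Nat.cast_sub (Nat.one_le_iff_ne_zero.mpr (n+1).factorial_ne_zero)]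
          simp
  have := mul_le_mul_of_nonneg_left hkey hN.le
  rw [mul_inv_cancel_left₀ hN.ne'] at this
  nlinarith [this, hsum]

lemma integrableOn_f (b : AffineBasis (Fin (n+1)) ℝ E) {f : E → ℝ}
    (hf : ConvexOn ℝ (convexHull ℝ (Set.range ⇑b)) f) :
    IntegrableOn f (convexHull ℝ (Set.range ⇑b)) volume := by
  set Δ := convexHull ℝ (Set.range ⇑b) with hΔdef
  have hconv : Convex ℝ Δ := convex_convexHull ℝ _
  have hcpt : IsCompact Δ := (Set.finite_range ⇑b).isCompact_convexHull (𝕜 := ℝ)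
  have hclosed : IsClosed Δ := hcpt.isClosed
  have hfront : volume (frontier Δ) = 0 := hconv.addHaar_frontier volume
  have hae : (Δ : Set E) =ᵐ[volume] (interior Δ : Set E) := by
    rw [Filter.eventuallyEq_set]
    have h1 : volume (Δ \ interior Δ) = 0 := by
      refine measure_mono_null ?_ hfront
      rw [hclosed.frontier_eq]
    have := measure_eq_zero_iff_ae_notMem.mp h1
    filter_upwards [this] with y hy
    simp only [Set.mem_diff, not_and, not_not] at hy
    exact ⟨fun h => hy h, fun h => interior_subset h⟩
  have hrestrict : volume.restrict Δ = volume.restrict (interior Δ) :=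
    Measure.restrict_congr_set hae
  have hfc : ContinuousOn f (interior Δ) :=
    (hf.subset interior_subset hconv.interior).continuousOn isOpen_interior
  have hmeas : AEStronglyMeasurable f (volume.restrict Δ) := by
    rw [hrestrict]; exact hfc.aestronglyMeasurable measurableSet_interior
  set M := Finset.univ.sup' Finset.univ_nonempty (fun i => f (b i)) with hMdef
  set B := ((n+1).factorial : ℝ) * f (((n : ℝ)+1)⁻¹ • ∑ j, b j)
    - (((n+1).factorial : ℝ) - 1) * M with hBdef
  set C := max |M| |B| with hCdef
  have hbound : ∀ y ∈ Δ, ‖f y‖ ≤ C := by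
    intro y hy
    rw [Real.norm_eq_abs, abs_le]
    constructor
    · have h1 : B ≤ f y := B_le_fy b hf hy
      have h2 : -C ≤ B := le_trans (by simp [hCdef]) (neg_abs_le B)
      linarith
    · exact (fy_le_M b hf hy).trans ((le_abs_self M).trans (le_max_left _ _))
  refine ⟨hmeas, ?_⟩
  refine HasFiniteIntegral.restrict_of_bounded (C := C) hcpt.measure_lt_top ?_
  exact (ae_restrict_iff' hclosed.measurableSet).mpr (Filter.Eventually.of_forall hbound)

lemma integrableOn_affcomp (b : AffineBasis (Fin (n+1)) ℝ E) (g : E →ᵃ[ℝ] ℝ) :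
    IntegrableOn (fun y => g y) (convexHull ℝ (Set.range ⇑b)) volume :=
  (g.continuous_of_finiteDimensional.continuousOn).integrableOn_compact
    ((Set.finite_range ⇑b).isCompact_convexHull (𝕜 := ℝ))

lemma integral_coord (b : AffineBasis (Fin (n+1)) ℝ E) (i : Fin (n+1)) :
    ∫ y in convexHull ℝ (Set.range ⇑b), b.coord i y
      = (volume (convexHull ℝ (Set.range ⇑b))).toReal / ((n:ℝ)+1) := by
  set Δ := convexHull ℝ (Set.range ⇑b) with hΔdef
  have hcpt : IsCompact Δ := (Set.finite_range ⇑b).isCompact_convexHull (𝕜 := ℝ)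
  have hmeasΔ : MeasurableSet Δ := hcpt.isClosed.measurableSet
  have hC : ∀ σ : Equiv.Perm (Fin (n+1)),
      ∫ y in Δ, b.coord i (Tmap b σ y) = ∫ y in Δ, b.coord i y := fun σ =>
    Tmap_setIntegral b σ (b.coord i)
  have hsum1 : ∑ σ : Equiv.Perm (Fin (n+1)), ∫ y in Δ, b.coord i (Tmap b σ y)
      = ((n+1).factorial : ℝ) * ∫ y in Δ, b.coord i y := by
    simp only [hC]
    rw [Finset.sum_const, Finset.card_univ, Fintype.card_perm, Fintype.card_fin, nsmul_eq_mul]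
  have hptwise : ∀ y : E, ∑ σ : Equiv.Perm (Fin (n+1)), b.coord i (Tmap b σ y)
      = (n.factorial : ℝ) := by
    intro y
    simp only [coord_Tmap]
    have : ∑ σ : Equiv.Perm (Fin (n+1)), b.coord (σ⁻¹ i) y
        = ∑ σ : Equiv.Perm (Fin (n+1)), b.coord (σ i) y :=
      Fintype.sum_equiv (Equiv.inv (Equiv.Perm (Fin (n+1)))) _ _ (fun σ => rfl)
    rw [this, sum_perm_eval (fun k => b.coord k y) i, b.sum_coord_apply_eq_one,
      nsmul_eq_mul, mul_one]
  have hsum2 : ∑ σ : Equiv.Perm (Fin (n+1)), ∫ y in Δ, b.coord i (Tmap b σ y)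
      = (n.factorial : ℝ) * (volume Δ).toReal := by
    rw [← integral_finset_sum]
    · rw [setIntegral_congr_fun hmeasΔ (g := fun _ => (n.factorial : ℝ))
        (fun y _ => hptwise y)]
      rw [setIntegral_const, smul_eq_mul, mul_comm]
      rfl
    · intro σ _
      exact integrableOn_affcomp b ((b.coord i).comp (Tmap b σ))
  have hN : ((n+1).factorial : ℝ) ≠ 0 := Nat.cast_ne_zero.mpr (n+1).factorial_ne_zero
  have heq : ((n+1).factorial : ℝ) * ∫ y in Δ, b.coord i y
      = (n.factorial : ℝ) * (volume Δ).toReal := by rw [← hsum1, hsum2]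
  rw [Nat.factorial_succ] at heq
  push_cast at heq
  have hn1 : ((n:ℝ)+1) ≠ 0 := by positivity
  have hnf : ((n.factorial : ℝ)) ≠ 0 := Nat.cast_ne_zero.mpr n.factorial_ne_zero
  field_simp at heq ⊢
  have heq2 : ((n.factorial : ℝ)) * (((n:ℝ)+1) * ∫ y in Δ, b.coord i y)
      = ((n.factorial : ℝ)) * (volume Δ).toReal := by linear_combination (n.factorial : ℝ) * heq
  have := mul_left_cancel₀ hnf heq2
  linarith

theorem hermite_hadamard_simplex (n : ℕ) (x : Fin (n + 1) → EuclideanSpace ℝ (Fin n))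
    (hx : AffineIndependent ℝ x) (f : EuclideanSpace ℝ (Fin n) → ℝ)
    (hf : ConvexOn ℝ (convexHull ℝ (Set.range x)) f) :
    f (((n : ℝ) + 1)⁻¹ • ∑ i, x i) ≤ (⨍ y in convexHull ℝ (Set.range x), f y) ∧
      (⨍ y in convexHull ℝ (Set.range x), f y) ≤ (∑ i, f (x i)) / ((n : ℝ) + 1) := by
  have hspan : affineSpan ℝ (Set.range x) = ⊤ := by
    rw [hx.affineSpan_eq_top_iff_card_eq_finrank_add_one]
    simp [finrank_euclideanSpace_fin]
  let b : AffineBasis (Fin (n+1)) ℝ (EuclideanSpace ℝ (Fin n)) := ⟨x, hx, hspan⟩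
  have hb : ⇑b = x := rfl
  rw [← hb] at hf ⊢
  set Δ := convexHull ℝ (Set.range ⇑b) with hΔdef
  have hcpt : IsCompact Δ := (Set.finite_range ⇑b).isCompact_convexHull (𝕜 := ℝ)
  have hmeasΔ : MeasurableSet Δ := hcpt.isClosed.measurableSet
  have hVpos : (0:ℝ) < (volume Δ).toReal := by
    refine ENNReal.toReal_pos ?_ hcpt.measure_lt_top.ne
    obtain ⟨z, hz⟩ := interior_convexHull_nonempty_iff_affineSpan_eq_top.mpr b.tot
    have hpos := (isOpen_interior (s := Δ)).measure_pos volume ⟨z, hz⟩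
    exact ((hpos.trans_le (measure_mono interior_subset)).ne')
  set V := (volume Δ).toReal with hVdef
  have hInt : IntegrableOn f Δ volume := integrableOn_f b hf
  have hN : (0:ℝ) < ((n+1).factorial : ℝ) := by positivity
  have havg : (⨍ y in Δ, f y) = V⁻¹ * ∫ y in Δ, f y := by
    rw [setAverage_eq, smul_eq_mul]
    rfl
  constructor
  · -- left inequality
    have hGint : IntegrableOn
        (fun y => (((n+1).factorial : ℝ))⁻¹ * ∑ σ : Equiv.Perm (Fin (n+1)), f (Tmap b σ y))
        Δ volume := by
      refine Integrable.const_mul ?_ _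
      exact integrable_finset_sum _ fun σ _ => Tmap_integrableOn b σ hInt
    have hmono : ∫ _y in Δ, f (((n : ℝ) + 1)⁻¹ • ∑ i, b i)
        ≤ ∫ y in Δ, (((n+1).factorial : ℝ))⁻¹ * ∑ σ : Equiv.Perm (Fin (n+1)), f (Tmap b σ y) := by
      refine setIntegral_mono_on (integrableOn_const hcpt.measure_lt_top.ne) hGint
        hmeasΔ ?_
      intro y hy
      exact key b hf hy
    have hGval : ∫ y in Δ, (((n+1).factorial : ℝ))⁻¹ * ∑ σ : Equiv.Perm (Fin (n+1)), f (Tmap b σ y)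
        = ∫ y in Δ, f y := by
      rw [integral_const_mul, integral_finset_sum _ (fun σ _ => Tmap_integrableOn b σ hInt)]
      simp only [Tmap_setIntegral b _ f]
      rw [Finset.sum_const, Finset.card_univ, Fintype.card_perm, Fintype.card_fin, nsmul_eq_mul,
        ← mul_assoc, inv_mul_cancel₀ hN.ne', one_mul]
    rw [setIntegral_const, smul_eq_mul] at hmono
    rw [hGval] at hmono
    rw [havg, le_inv_mul_iff₀ hVpos]
    exact hmono
  · -- right inequality
    have hgint : IntegrableOn (fun y => ∑ i, b.coord i y * f (b i)) Δ volume :=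
      integrable_finset_sum _ fun i _ => (integrableOn_affcomp b (b.coord i)).mul_const _
    have hmono : ∫ y in Δ, f y ≤ ∫ y in Δ, ∑ i, b.coord i y * f (b i) :=
      setIntegral_mono_on hInt hgint hmeasΔ (fun y hy => fy_le_sum b hf hy)
    have hval : ∫ y in Δ, ∑ i, b.coord i y * f (b i) = (∑ i, f (b i)) * (V / ((n:ℝ)+1)) := by
      rw [integral_finset_sum _ (fun i _ => (integrableOn_affcomp b (b.coord i)).mul_const _)]
      simp only [integral_mul_const]
      simp only [integral_coord b]
      rw [hVdef, Finset.sum_mul]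
      exact Finset.sum_congr rfl fun i _ => by ring
    rw [hval] at hmono
    rw [havg]
    have hn1 : (0:ℝ) < (n:ℝ)+1 := by positivity
    calc V⁻¹ * ∫ y in Δ, f y ≤ V⁻¹ * ((∑ i, f (b i)) * (V / ((n:ℝ)+1))) := by
          exact mul_le_mul_of_nonneg_left hmono (le_of_lt (inv_pos.mpr hVpos))
      _ = (∑ i, f (b i)) / ((n:ℝ)+1) := by field_simp <;> ring

end
end

section
/- The n-dimensional volume of a regular simplex in ℝⁿ with all edges of unit length equals (1/n!)·√((n+1)/2ⁿ). -/
open MeasureTheory Finset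
open scoped Pointwise RealInnerProductSpace

lemma measurableSet_corner (n : ℕ) (c : ℝ) :
    MeasurableSet {t : Fin n → ℝ | (∀ i, 0 ≤ t i) ∧ ∑ i, t i ≤ c} := by
  have h1 : MeasurableSet {t : Fin n → ℝ | ∀ i, 0 ≤ t i} := by
    rw [Set.setOf_forall]
    exact MeasurableSet.iInter fun i =>
      measurableSet_le measurable_const (measurable_pi_apply i)
  have h2 : MeasurableSet {t : Fin n → ℝ | ∑ i, t i ≤ c} :=
    measurableSet_le (Finset.measurable_sum _ fun i _ => measurable_pi_apply i) measurable_const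
  exact h1.inter h2

lemma volume_corner : ∀ (n : ℕ) (c : ℝ), 0 ≤ c →
    volume {t : Fin n → ℝ | (∀ i, 0 ≤ t i) ∧ ∑ i, t i ≤ c} =
      ENNReal.ofReal (c ^ n / n.factorial) := by
  intro n
  induction n with
  | zero =>
    intro c hc
    have hset : {t : Fin 0 → ℝ | (∀ i, 0 ≤ t i) ∧ ∑ i, t i ≤ c} = Set.univ := by
      ext t; simp [hc]
    rw [hset, volume_pi, Measure.pi_univ]
    simp
  | succ n ih =>
    intro c hc
    set S := {t : Fin (n + 1) → ℝ | (∀ i, 0 ≤ t i) ∧ ∑ i, t i ≤ c} with hS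
    set e := MeasurableEquiv.piFinSuccAbove (fun _ : Fin (n + 1) => ℝ) 0 with he
    have hmp := volume_preserving_piFinSuccAbove (fun _ : Fin (n + 1) => ℝ) 0
    have himg : e '' S = e.symm ⁻¹' S := Equiv.image_eq_preimage_symm _ _
    have hmeasS : MeasurableSet S := measurableSet_corner (n + 1) c
    have hmeasImg : MeasurableSet (e '' S) := himg ▸ e.symm.measurable hmeasS
    have h1 : volume S = volume (e '' S) := by
      rw [← hmp.map_eq, MeasurableEquiv.map_apply, Set.preimage_image_eq _ e.injective]
    rw [h1, MeasureTheory.Measure.volume_eq_prod, Measure.prod_apply hmeasImg]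
    have hslice : ∀ a : ℝ, volume (Prod.mk a ⁻¹' (e '' S)) =
        Set.indicator (Set.Icc 0 c)
          (fun a => ENNReal.ofReal ((c - a) ^ n / n.factorial)) a := by
      intro a
      have hpre : Prod.mk a ⁻¹' (e '' S) = {g : Fin n → ℝ | Fin.cons a g ∈ S} := by
        rw [himg]
        ext g
        simp only [Set.mem_preimage, Set.mem_setOf_eq]
        have h0 : e.symm (a, g) = Fin.insertNth 0 a g := rfl
        rw [h0, Fin.insertNth_zero']
      by_cases ha : a ∈ Set.Icc 0 c
      · obtain ⟨ha0, hac⟩ := ha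
        have : Prod.mk a ⁻¹' (e '' S) =
            {g : Fin n → ℝ | (∀ i, 0 ≤ g i) ∧ ∑ i, g i ≤ c - a} := by
          rw [hpre]
          ext g
          simp only [hS, Set.mem_setOf_eq, Fin.forall_fin_succ, Fin.cons_zero, Fin.cons_succ,
            Fin.sum_cons]
          constructor
          · rintro ⟨⟨-, hg⟩, hsum⟩; exact ⟨hg, by linarith⟩
          · rintro ⟨hg, hsum⟩; exact ⟨⟨ha0, hg⟩, by linarith⟩
        rw [this, ih (c - a) (by linarith), Set.indicator_of_mem (show a ∈ Set.Icc (0:ℝ) c from ⟨ha0, hac⟩)]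
      · have : Prod.mk a ⁻¹' (e '' S) = ∅ := by
          rw [hpre]
          ext g
          simp only [hS, Set.mem_setOf_eq, Fin.forall_fin_succ, Fin.cons_zero, Fin.cons_succ,
            Fin.sum_cons, Set.mem_empty_iff_false, iff_false]
          rintro ⟨⟨ha0, hg⟩, hsum⟩
          have : 0 ≤ ∑ i, g i := Finset.sum_nonneg fun i _ => hg i
          exact ha ⟨ha0, by linarith⟩
        rw [this, Set.indicator_of_notMem ha]
        simp
    simp_rw [hslice]
    rw [lintegral_indicator measurableSet_Icc]
    have hcont : Continuous fun a : ℝ => (c - a) ^ n / (n.factorial : ℝ) := by fun_prop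
    rw [← ofReal_integral_eq_lintegral_ofReal
      (hcont.integrableOn_Icc)
      (Filter.eventually_of_mem (self_mem_ae_restrict measurableSet_Icc)
        (fun a ha => div_nonneg (pow_nonneg (by linarith [ha.2]) n) (by positivity)))]
    congr 1
    rw [MeasureTheory.integral_Icc_eq_integral_Ioc, ← intervalIntegral.integral_of_le hc]
    rw [intervalIntegral.integral_div]
    have : (∫ a in (0:ℝ)..c, (c - a) ^ n) = c ^ (n + 1) / (n + 1) := by
      rw [intervalIntegral.integral_comp_sub_left (fun x => x ^ n) c]
      simp [integral_pow]
    rw [this]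
    have hfac : ((n + 1).factorial : ℝ) = (n + 1) * n.factorial := by
      rw [Nat.factorial_succ]; push_cast; ring
    rw [hfac, div_div]


lemma mem_convexHull_range_iff {E : Type*} [AddCommGroup E] [Module ℝ E] {ι : Type*} [Fintype ι]
    (v : ι → E) (y : E) :
    y ∈ convexHull ℝ (Set.range v) ↔
      ∃ w : ι → ℝ, (∀ i, 0 ≤ w i) ∧ ∑ i, w i = 1 ∧ ∑ i, w i • v i = y := by
  classical
  rw [convexHull_range_eq_exists_affineCombination]
  constructor
  · rintro ⟨s, w, hw0, hw1, rfl⟩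
    set w' : ι → ℝ := fun i => if i ∈ s then w i else 0 with hw'
    have hsum : ∀ g : ι → E, ∑ i, w' i • g i = ∑ i ∈ s, w i • g i := by
      intro g
      rw [← Finset.sum_subset (Finset.subset_univ s) (fun i _ hi => by simp [hw', hi])]
      exact Finset.sum_congr rfl fun i hi => by simp [hw', hi]
    have hsum1 : ∑ i, w' i = ∑ i ∈ s, w i := by
      rw [← Finset.sum_subset (Finset.subset_univ s) (fun i _ hi => by simp [hw', hi])]
      exact Finset.sum_congr rfl fun i hi => by simp [hw', hi]
    refine ⟨w', fun i => ?_, by rw [hsum1]; exact hw1, ?_⟩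
    · by_cases hi : i ∈ s <;> simp [hw', hi]
      exact hw0 i hi
    · rw [affineCombination_eq_centerMass hw1, Finset.centerMass_eq_of_sum_1 _ _ hw1, hsum]
  · rintro ⟨w, hw0, hw1, rfl⟩
    refine ⟨Finset.univ, w, fun i _ => hw0 i, hw1, ?_⟩
    rw [affineCombination_eq_centerMass hw1, Finset.centerMass_eq_of_sum_1 _ _ hw1]

theorem volume_regular_simplex (n : ℕ) (x : Fin (n + 1) → EuclideanSpace ℝ (Fin n))
    (h : ∀ i j, i ≠ j → dist (x i) (x j) = 1) :
    volume (convexHull ℝ (Set.range x)) =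
      ENNReal.ofReal ((n.factorial : ℝ)⁻¹ * Real.sqrt (((n : ℝ) + 1) / 2 ^ n)) := by
  classical
  set v : Fin n → EuclideanSpace ℝ (Fin n) := fun i => x i.succ - x 0 with hv
  have hinner : ∀ i j, ⟪v i, v j⟫ = if i = j then (1 : ℝ) else 1 / 2 := by
    intro i j
    by_cases hij : i = j
    · subst hij
      have hni : ‖v i‖ = 1 := by
        rw [hv]
        rw [← dist_eq_norm]
        exact h i.succ 0 (Fin.succ_ne_zero i)
      rw [if_pos rfl, real_inner_self_eq_norm_sq, hni, one_pow]
    · simp only [if_neg hij]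
      have hvv : v i - v j = x i.succ - x j.succ := by simp only [hv, sub_sub_sub_cancel_right]
      have hnd : ‖v i - v j‖ = 1 := by
        rw [hvv, ← dist_eq_norm]
        exact h i.succ j.succ (by simpa [Fin.succ_inj] using hij)
      have hni : ‖v i‖ = 1 := by
        rw [hv, ← dist_eq_norm]; exact h i.succ 0 (Fin.succ_ne_zero i)
      have hnj : ‖v j‖ = 1 := by
        rw [hv, ← dist_eq_norm]; exact h j.succ 0 (Fin.succ_ne_zero j)
      have hexp := norm_sub_sq_real (v i) (v j)
      rw [hnd, hni, hnj] at hexp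
      linarith [hexp]
  set f : EuclideanSpace ℝ (Fin n) →ₗ[ℝ] EuclideanSpace ℝ (Fin n) :=
    { toFun := fun t => ∑ i, t i • v i
      map_add' := fun a b => by
        simp only [PiLp.add_apply, add_smul]
        rw [Finset.sum_add_distrib]
      map_smul' := fun c a => by
        simp only [PiLp.smul_apply, smul_eq_mul, RingHom.id_apply, mul_smul]
        rw [Finset.smul_sum] } with hf
  set S : Set (EuclideanSpace ℝ (Fin n)) := {t | (∀ i, 0 ≤ t i) ∧ ∑ i, t i ≤ 1} with hSdef
  -- hull description
  have key : ∀ w : Fin (n + 1) → ℝ, ∑ i, w i = 1 →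
      x 0 + ∑ i : Fin n, w i.succ • v i = ∑ i, w i • x i := by
    intro w hw
    rw [Fin.sum_univ_succ (f := fun i => w i • x i)]
    have h0 : w 0 = 1 - ∑ i : Fin n, w i.succ := by
      rw [Fin.sum_univ_succ] at hw; linarith
    simp only [hv, smul_sub]
    rw [Finset.sum_sub_distrib, ← Finset.sum_smul, h0, sub_smul, one_smul]
    abel
  have hhull : convexHull ℝ (Set.range x) = x 0 +ᵥ (f '' S) := by
    ext y
    rw [mem_convexHull_range_iff, Set.mem_vadd_set]
    constructor
    · rintro ⟨w, hw0, hw1, rfl⟩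
      refine ⟨f (WithLp.toLp 2 fun i => w i.succ), ⟨WithLp.toLp 2 fun i => w i.succ, ⟨fun i => hw0 i.succ, ?_⟩, rfl⟩, ?_⟩
      · show ∑ i : Fin n, w i.succ ≤ 1
        rw [Fin.sum_univ_succ] at hw1
        have := hw0 0
        linarith
      · show x 0 + ∑ i : Fin n, w i.succ • v i = ∑ i, w i • x i
        exact key w hw1
    · rintro ⟨-, ⟨t, ⟨ht0, ht1⟩, rfl⟩, rfl⟩
      set w : Fin (n + 1) → ℝ := Fin.cons (1 - ∑ i, t i) t with hwdef
      have hw1 : ∑ i, w i = 1 := by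
        rw [hwdef, Fin.sum_cons]; ring
      refine ⟨w, ?_, hw1, ?_⟩
      · intro i
        refine Fin.cases ?_ ?_ i
        · rw [hwdef, Fin.cons_zero]; linarith
        · intro j; rw [hwdef, Fin.cons_succ]; exact ht0 j
      · rw [← key w hw1]
        have hft : ∑ i : Fin n, w i.succ • v i = f t := by
          show ∑ i : Fin n, w i.succ • v i = ∑ i, t i • v i
          simp [hwdef]
        rw [hft]
        rfl
  -- volume of the corner simplex in EuclideanSpace
  have hvolS : volume S = ENNReal.ofReal (1 / n.factorial) := by
    have hmp := (EuclideanSpace.volume_preserving_symm_measurableEquiv_toLp (Fin n)).symm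
    rw [← hmp.map_eq, MeasurableEquiv.map_apply]
    have hset : (MeasurableEquiv.toLp 2 (Fin n → ℝ)).symm.symm ⁻¹' S =
        {t : Fin n → ℝ | (∀ i, 0 ≤ t i) ∧ ∑ i, t i ≤ 1} := rfl
    rw [hset, volume_corner n 1 zero_le_one, one_pow]
  -- determinant
  have hdet2 : (LinearMap.det f) ^ 2 = ((n : ℝ) + 1) / 2 ^ n := by
    set b := (EuclideanSpace.basisFun (Fin n) ℝ).toBasis with hb
    rw [← LinearMap.det_toMatrix b f]
    set M := LinearMap.toMatrix b b f with hM
    have hMapp : ∀ j i, M j i = (v i) j := by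
      intro j i
      rw [hM, LinearMap.toMatrix_apply]
      have hfb : f (b i) = v i := by
        show ∑ k : Fin n, (b i) k • v k = v i
        have hbi : ∀ k, (b i) k = if k = i then (1 : ℝ) else 0 := by
          intro k
          rw [hb, OrthonormalBasis.coe_toBasis, EuclideanSpace.basisFun_apply,
            EuclideanSpace.single_apply]
        simp [hbi, ite_smul]
      rw [hfb, hb, OrthonormalBasis.coe_toBasis_repr_apply, EuclideanSpace.basisFun_repr]
    have hMtM : M.transpose * M = Matrix.of (fun i j => if i = j then (1 : ℝ) else 1 / 2) := by
      ext i j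
      rw [Matrix.mul_apply]
      simp only [Matrix.transpose_apply, hMapp, Matrix.of_apply]
      have hsum : ∑ k, (v i) k * (v j) k = (inner ℝ (v i) (v j) : ℝ) := by
        rw [PiLp.inner_apply]
        simp [RCLike.inner_apply', mul_comm]
      rw [hsum, hinner i j]
    have hdetG : (Matrix.of (fun i j => if i = j then (1 : ℝ) else 1 / 2) :
        Matrix (Fin n) (Fin n) ℝ).det = ((n : ℝ) + 1) / 2 ^ n := by
      have hGeq : (Matrix.of (fun i j => if i = j then (1 : ℝ) else 1 / 2) :
          Matrix (Fin n) (Fin n) ℝ)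
          = (2⁻¹ : ℝ) • (1 + (Matrix.replicateCol (Fin 1) (1 : Fin n → ℝ) * Matrix.replicateRow (Fin 1) (1 : Fin n → ℝ) :
            Matrix (Fin n) (Fin n) ℝ)) := by
        ext i j
        by_cases hij : i = j <;>
          simp [hij, Matrix.one_apply, Matrix.mul_apply] <;> norm_num
      rw [hGeq, Matrix.det_smul]
      erw [Matrix.det_one_add_replicateCol_mul_replicateRow]
      simp only [dotProduct, Pi.one_apply, mul_one, Finset.sum_const, Finset.card_univ,
        Fintype.card_fin, smul_eq_mul, nsmul_eq_mul]
      field_simp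
      have h2 : ((1:ℝ) / 2) ^ n * 2 ^ n = 1 := by rw [← mul_pow]; norm_num
      linear_combination ((n : ℝ) + 1) * h2
    have hsq : (M.transpose * M).det = M.det ^ 2 := by
      rw [Matrix.det_mul, Matrix.det_transpose, sq]
    rw [← hsq, hMtM, hdetG]
  have hdet : |LinearMap.det f| = Real.sqrt (((n : ℝ) + 1) / 2 ^ n) := by
    rw [← hdet2, Real.sqrt_sq_eq_abs]
  rw [hhull, measure_vadd, Measure.addHaar_image_linearMap, hdet, hvolS,
    ← ENNReal.ofReal_mul (by positivity)]
  congr 1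
  rw [one_div]
  ring
end

section
/- For a convex function f : [a,b] → ℝ with a < b, (1/(b-a)) ∫_a^b f(t) dt ≤ (1/2)[f((a+b)/2) + (f(a)+f(b))/2]. -/
open MeasureTheory

/-- Chord bound for a convex function. -/
lemma chord_bound {a b : ℝ} (hab : a < b) {f : ℝ → ℝ}
    (hf : ConvexOn ℝ (Set.Icc a b) f) {t : ℝ} (ht : t ∈ Set.Icc a b) :
    f t ≤ ((b - t) * f a + (t - a) * f b) / (b - a) := by
  have hba : (0:ℝ) < b - a := by linarith
  have h1 : (0:ℝ) ≤ (b - t) / (b - a) := by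
    apply div_nonneg; linarith [ht.2]; linarith
  have h2 : (0:ℝ) ≤ (t - a) / (b - a) := by
    apply div_nonneg; linarith [ht.1]; linarith
  have h3 : (b - t) / (b - a) + (t - a) / (b - a) = 1 := by
    field_simp
    ring
  have := hf.2 (Set.left_mem_Icc.2 hab.le) (Set.right_mem_Icc.2 hab.le) h1 h2 h3
  have ht' : ((b - t) / (b - a)) • a + ((t - a) / (b - a)) • b = t := by
    rw [smul_eq_mul, smul_eq_mul, div_mul_eq_mul_div, div_mul_eq_mul_div,
      ← add_div, div_eq_iff hba.ne']
    ring
  rw [ht'] at this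
  calc f t ≤ ((b - t) / (b - a)) • f a + ((t - a) / (b - a)) • f b := this
    _ = ((b - t) * f a + (t - a) * f b) / (b - a) := by
        simp [smul_eq_mul]; ring

/-- A convex function on a compact interval is interval integrable. -/
lemma convexOn_intervalIntegrable {a b : ℝ} (hab : a < b) {f : ℝ → ℝ}
    (hf : ConvexOn ℝ (Set.Icc a b) f) : IntervalIntegrable f volume a b := by
  have hba : (0:ℝ) < b - a := by linarith
  set M : ℝ := max (f a) (f b) with hM
  set m : ℝ := (a + b) / 2 with hm
  have hmem : m ∈ Set.Icc a b := ⟨by simp [hm]; linarith, by simp [hm]; linarith⟩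
  -- upper bound: f t ≤ M on Icc
  have hub : ∀ t ∈ Set.Icc a b, f t ≤ M := by
    intro t ht
    have := chord_bound hab hf ht
    have h1 : ((b - t) * f a + (t - a) * f b) / (b - a) ≤ M := by
      rw [div_le_iff₀ hba]
      have : (b - t) * f a ≤ (b - t) * M := by
        apply mul_le_mul_of_nonneg_left (le_max_left _ _); linarith [ht.2]
      have : (t - a) * f b ≤ (t - a) * M := by
        apply mul_le_mul_of_nonneg_left (le_max_right _ _); linarith [ht.1]
      nlinarith [ht.1, ht.2]
    linarith
  -- lower bound: f t ≥ 2 f m - M using convexity at the midpoint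
  have hlb : ∀ t ∈ Set.Icc a b, 2 * f m - M ≤ f t := by
    intro t ht
    have hs : a + b - t ∈ Set.Icc a b := ⟨by linarith [ht.2], by linarith [ht.1]⟩
    have := hf.2 ht hs (by norm_num : (0:ℝ) ≤ 1/2) (by norm_num : (0:ℝ) ≤ 1/2)
      (by norm_num)
    have hmid : (1/2 : ℝ) • t + (1/2 : ℝ) • (a + b - t) = m := by
      simp [hm, smul_eq_mul]; ring
    rw [hmid] at this
    have h2 : f (a + b - t) ≤ M := hub _ hs
    simp only [smul_eq_mul] at this
    linarith
  have hC : ∀ t ∈ Set.Icc a b, |f t| ≤ max M (M - 2 * f m) := by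
    intro t ht
    rw [abs_le]
    constructor
    · have := hlb t ht
      have : -(M - 2 * f m) ≤ f t := by linarith
      linarith [le_max_right M (M - 2 * f m), this]
    · exact le_trans (hub t ht) (le_max_left _ _)
  -- f is continuous on Ioo a b
  have hcont : ContinuousOn f (Set.Ioo a b) := by
    have := hf.continuousOn_interior
    rwa [interior_Icc] at this
  rw [intervalIntegrable_iff_integrableOn_Ioo_of_le hab.le]
  apply Integrable.mono' (g := fun _ => max M (M - 2 * f m))
  · exact integrable_const _
  · exact (hcont.aemeasurable measurableSet_Ioo).aestronglyMeasurable
  · filter_upwards [ae_restrict_mem measurableSet_Ioo] with t ht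
    exact hC t (Set.Ioo_subset_Icc_self ht)

/-- Right-hand Hermite–Hadamard inequality. -/
lemma hh_right {a b : ℝ} (hab : a < b) {f : ℝ → ℝ}
    (hf : ConvexOn ℝ (Set.Icc a b) f) :
    (∫ t in a..b, f t) ≤ (b - a) * (f a + f b) / 2 := by
  have hba : (0:ℝ) < b - a := by linarith
  have hint := convexOn_intervalIntegrable hab hf
  have hgint : IntervalIntegrable
      (fun t => ((b - t) * f a + (t - a) * f b) / (b - a)) volume a b :=
    (Continuous.intervalIntegrable (by continuity) a b)
  have h := intervalIntegral.integral_mono_on hab.le hint hgint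
    (fun t ht => chord_bound hab hf ht)
  refine h.trans (le_of_eq ?_)
  have : (∫ t in a..b, ((b - t) * f a + (t - a) * f b) / (b - a))
      = (b - a)⁻¹ * ∫ t in a..b, ((b - t) * f a + (t - a) * f b) := by
    rw [intervalIntegral.integral_div, inv_mul_eq_div]
  rw [this]
  have : (∫ t in a..b, ((b - t) * f a + (t - a) * f b))
      = (∫ t in a..b, (b * f a - a * f b) + t * (f b - f a)) := by
    congr 1; ext t; ring
  rw [this]
  rw [intervalIntegral.integral_add (intervalIntegrable_const)
    (by apply Continuous.intervalIntegrable; continuity)]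
  have h1 : (∫ _ in a..b, (b * f a - a * f b)) = (b - a) * (b * f a - a * f b) := by
    simp [smul_eq_mul]; ring
  have h2 : (∫ t in a..b, t * (f b - f a)) = (b ^ 2 - a ^ 2) / 2 * (f b - f a) := by
    rw [intervalIntegral.integral_mul_const, integral_id]
  rw [h1, h2]
  field_simp
  ring

theorem hermite_hadamard_refined_interval (a b : ℝ) (hab : a < b) (f : ℝ → ℝ)
    (hf : ConvexOn ℝ (Set.Icc a b) f) :
    (b - a)⁻¹ * (∫ t in a..b, f t) ≤
      (1 / 2) * (f ((a + b) / 2) + (f a + f b) / 2) := by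
  have hba : (0:ℝ) < b - a := by linarith
  set m : ℝ := (a + b) / 2 with hm
  have ham : a < m := by rw [hm]; linarith
  have hmb : m < b := by rw [hm]; linarith
  have hsub1 : Set.Icc a m ⊆ Set.Icc a b :=
    Set.Icc_subset_Icc le_rfl hmb.le
  have hsub2 : Set.Icc m b ⊆ Set.Icc a b :=
    Set.Icc_subset_Icc ham.le le_rfl
  have hf1 : ConvexOn ℝ (Set.Icc a m) f := hf.subset hsub1 (convex_Icc a m)
  have hf2 : ConvexOn ℝ (Set.Icc m b) f := hf.subset hsub2 (convex_Icc m b)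
  have h1 := hh_right ham hf1
  have h2 := hh_right hmb hf2
  have hsplit : (∫ t in a..b, f t) = (∫ t in a..m, f t) + (∫ t in m..b, f t) := by
    rw [intervalIntegral.integral_add_adjacent_intervals
      (convexOn_intervalIntegrable ham hf1) (convexOn_intervalIntegrable hmb hf2)]
  rw [inv_mul_le_iff₀ hba, hsplit]
  have hma : m - a = (b - a) / 2 := by rw [hm]; ring
  have hbm : b - m = (b - a) / 2 := by rw [hm]; ring
  rw [hma] at h1; rw [hbm] at h2
  nlinarith [h1, h2]
end
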